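/- Let n ≥ 2, 1 < p, p̄₁, p̄₂ < ∞, and r > 0. For f₀ = χ_{B(0,r)}, the characteristic function of the ball of radius r centered at the origin in ℝⁿ, one has the equality ‖H f₀‖_{wL^p_{|x|}L^{p̄₂}_θ} = ω_n^{1/p̄₂ - 1/p̄₁} · ‖f₀‖_{L^p_{|x|}L^{p̄₁}_θ}; in particular the constant ω_n^{1/p̄₂ - 1/p̄₁} in the weak-type estimate for H is sharp. -/

import Mathlib

open MeasureTheory Metric Set

noncomputable section

/-- Euclidean space ℝⁿ. -/
abbrev Euc (n : ℕ) := EuclideanSpace ℝ (Fin n)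

/-- Volume of the unit ball in ℝⁿ: Ω_n = π^(n/2) / Γ(1 + n/2). -/
def ballVol (n : ℕ) : ℝ := Real.pi ^ ((n : ℝ) / 2) / Real.Gamma (1 + (n : ℝ) / 2)

/-- Surface measure of the unit sphere S^{n-1}: ω_n = 2π^(n/2) / Γ(n/2). -/
def sphArea (n : ℕ) : ℝ := 2 * Real.pi ^ ((n : ℝ) / 2) / Real.Gamma ((n : ℝ) / 2)

/-- The surface measure dθ on the unit sphere S^{n-1} ⊂ ℝⁿ (total mass ω_n = n·Ω_n). -/
def sphereMeasure (n : ℕ) : Measure (sphere (0 : Euc n) 1) :=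
  (volume : Measure (Euc n)).toSphere

/-- Mixed radial-angular norm
‖f‖ = (∫₀^∞ (∫_{S^{n-1}} |f(rθ)|^{p̄} dθ)^{p/p̄} r^{n-1} dr)^{1/p}. -/
def mixedNorm (n : ℕ) (p pb : ℝ) (f : Euc n → ℝ) : ℝ :=
  (∫ r in Ioi (0 : ℝ),
      (∫ θ, |f (r • (θ : Euc n))| ^ pb ∂(sphereMeasure n)) ^ (p / pb) * r ^ ((n : ℝ) - 1)) ^ (1 / p)

/-- Weak mixed radial-angular norm: sup_{λ>0} λ‖χ_{|f|>λ}‖. -/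
def wMixedNorm (n : ℕ) (p pb : ℝ) (f : Euc n → ℝ) : ℝ :=
  ⨆ l : {l : ℝ // 0 < l},
    l.1 * mixedNorm n p pb (indicator {x | l.1 < |f x|} fun _ => (1 : ℝ))

/-- n-dimensional Hardy operator H f(x) = (Ω_n |x|ⁿ)⁻¹ ∫_{|y|<|x|} f(y) dy. -/
def hardyOp (n : ℕ) (f : Euc n → ℝ) (x : Euc n) : ℝ :=
  (ballVol n * ‖x‖ ^ n)⁻¹ * ∫ y in {y : Euc n | ‖y‖ < ‖x‖}, f y

/-- Dual Hardy operator H* f(x) = ∫_{|y|≥|x|} f(y)/(Ω_n |y|ⁿ) dy. -/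
def dualHardyOp (n : ℕ) (f : Euc n → ℝ) (x : Euc n) : ℝ :=
  ∫ y in {y : Euc n | ‖x‖ ≤ ‖y‖}, f y / (ballVol n * ‖y‖ ^ n)

/-- Fractional Hardy operator H_β f(x) = (Ω_n^{1/n}|x|)^{β-n} ∫_{|y|<|x|} f(y) dy. -/
def fracHardyOp (n : ℕ) (β : ℝ) (f : Euc n → ℝ) (x : Euc n) : ℝ :=
  (ballVol n ^ ((1 : ℝ) / n) * ‖x‖) ^ (-((n : ℝ) - β)) * ∫ y in {y : Euc n | ‖y‖ < ‖x‖}, f y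

/-- L^p norm on ℝⁿ. -/
def lpNorm (n : ℕ) (p : ℝ) (f : Euc n → ℝ) : ℝ := (∫ x : Euc n, |f x| ^ p) ^ (1 / p)

/-- Beta function B(a,b) = ∫₀¹ t^{a-1}(1-t)^{b-1} dt. -/
def betaFn (a b : ℝ) : ℝ := ∫ t in (0 : ℝ)..1, t ^ (a - 1) * (1 - t) ^ (b - 1)

/-- Sharp constant C_{p,q,n,β} = (p'/q)^{1/q}((n/(qβ))·B(n/(qβ), n/(q'β)))^{-β/n}. -/
def fracHardyConst (p q : ℝ) (n : ℕ) (β : ℝ) : ℝ :=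
  (p / (p - 1) / q) ^ (1 / q) *
    ((n / (q * β)) * betaFn ((n : ℝ) / (q * β)) ((n : ℝ) / ((q / (q - 1)) * β))) ^ (-(β / (n : ℝ)))



section Helpers

lemma ballVol_pos {n : ℕ} (hn : 2 ≤ n) : 0 < ballVol n := by
  apply div_pos (Real.rpow_pos_of_pos Real.pi_pos _)
  apply Real.Gamma_pos_of_pos; positivity

lemma sphArea_pos {n : ℕ} (hn : 2 ≤ n) : 0 < sphArea n := by
  apply div_pos (by positivity)
  apply Real.Gamma_pos_of_pos
  have : (0:ℝ) < (n:ℝ) := by exact_mod_cast Nat.lt_of_lt_of_le Nat.zero_lt_two hn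
  positivity

lemma vol_ball_real {n : ℕ} (hn : 2 ≤ n) {R : ℝ} (hR : 0 ≤ R) :
    (volume (ball (0 : Euc n) R)).toReal = ballVol n * R ^ n := by
  have : Nonempty (Fin n) := ⟨⟨0, by omega⟩⟩
  rw [EuclideanSpace.volume_ball (Fin n) 0 R]
  have hc : Real.sqrt Real.pi ^ Fintype.card (Fin n) / Real.Gamma (Fintype.card (Fin n) / 2 + 1)
      = ballVol n := by
    rw [ballVol, Fintype.card_fin]
    congr 1
    · rw [Real.sqrt_eq_rpow, ← Real.rpow_natCast (Real.pi ^ ((1:ℝ)/2)) n,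
        ← Real.rpow_mul Real.pi_pos.le]
      ring_nf
    · ring_nf
  rw [hc, ← ENNReal.ofReal_pow hR, ← ENNReal.ofReal_mul (by positivity),
    ENNReal.toReal_ofReal (by have := ballVol_pos hn; positivity)]
  rw [Fintype.card_fin]; ring

lemma sphereMeasure_univ {n : ℕ} (hn : 2 ≤ n) :
    (sphereMeasure n univ).toReal = sphArea n := by
  have hnp : (0:ℝ) < (n:ℝ) := by exact_mod_cast Nat.lt_of_lt_of_le Nat.zero_lt_two hn
  rw [sphereMeasure, Measure.toSphere_apply_univ, ENNReal.toReal_mul, ENNReal.toReal_natCast,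
    finrank_euclideanSpace, Fintype.card_fin, vol_ball_real hn zero_le_one, one_pow, mul_one]
  have hg : Real.Gamma (1 + (n:ℝ)/2) = ((n:ℝ)/2) * Real.Gamma ((n:ℝ)/2) := by
    rw [add_comm, Real.Gamma_add_one (by positivity)]
  have hgne : Real.Gamma ((n:ℝ)/2) ≠ 0 := (Real.Gamma_pos_of_pos (by positivity)).ne'
  rw [ballVol, sphArea, hg]
  field_simp

lemma mixedNorm_indicator {n : ℕ} (hn : 2 ≤ n) {p pb : ℝ} (hp : 1 < p) (hpb : 1 < pb)
    {R : ℝ} (hR : 0 < R) {S : Set (Euc n)}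
    (hS : ∀ s : ℝ, 0 < s → ∀ θ : sphere (0 : Euc n) 1, (s • (θ : Euc n) ∈ S ↔ s < R)) :
    mixedNorm n p pb (indicator S fun _ => (1:ℝ))
      = sphArea n ^ (1/pb) * (R ^ (n:ℝ) / n) ^ (1/p) := by
  have hω := sphArea_pos hn
  have hnp : (0:ℝ) < (n:ℝ) := by exact_mod_cast Nat.lt_of_lt_of_le Nat.zero_lt_two hn
  rw [mixedNorm]
  have key : ∀ s ∈ Ioi (0:ℝ),
      (∫ θ, |indicator S (fun _ => (1:ℝ)) (s • (θ : Euc n))| ^ pb ∂(sphereMeasure n)) ^ (p/pb)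
          * s ^ ((n:ℝ)-1)
        = (Ioo (0:ℝ) R).indicator (fun s => sphArea n ^ (p/pb) * s ^ ((n:ℝ)-1)) s := by
    intro s hs
    rw [mem_Ioi] at hs
    by_cases hsR : s < R
    · have h1 : ∀ θ : sphere (0:Euc n) 1,
          |indicator S (fun _ => (1:ℝ)) (s • (θ : Euc n))| ^ pb = 1 := by
        intro θ
        rw [indicator_of_mem ((hS s hs θ).2 hsR)]
        simp
      rw [integral_congr_ae (Filter.Eventually.of_forall h1), integral_const, smul_eq_mul,
        mul_one, measureReal_def, sphereMeasure_univ hn, indicator_of_mem (mem_Ioo.2 ⟨hs, hsR⟩)]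
    · have h1 : ∀ θ : sphere (0:Euc n) 1,
          |indicator S (fun _ => (1:ℝ)) (s • (θ : Euc n))| ^ pb = 0 := by
        intro θ
        rw [indicator_of_notMem (fun h => hsR ((hS s hs θ).1 h))]
        rw [abs_zero, Real.zero_rpow (by positivity)]
      rw [integral_congr_ae (Filter.Eventually.of_forall h1), integral_zero,
        Real.zero_rpow (by positivity), zero_mul,
        indicator_of_notMem (fun h => hsR (mem_Ioo.1 h).2)]
  rw [setIntegral_congr_fun measurableSet_Ioi key, setIntegral_indicator measurableSet_Ioo,
    Set.inter_eq_self_of_subset_right Ioo_subset_Ioi_self, MeasureTheory.integral_const_mul]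
  have hint : ∫ s in Ioo (0:ℝ) R, s ^ ((n:ℝ)-1) = R ^ (n:ℝ) / n := by
    rw [← integral_Ioc_eq_integral_Ioo, ← intervalIntegral.integral_of_le hR.le,
      integral_rpow (Or.inl (by linarith : (-1:ℝ) < (n:ℝ)-1))]
    have h2 : (n:ℝ) - 1 + 1 = (n:ℝ) := by ring
    rw [h2, Real.zero_rpow (by positivity)]
    ring
  rw [hint, Real.mul_rpow (Real.rpow_nonneg hω.le _) (by positivity),
    ← Real.rpow_mul hω.le]
  congr 2
  field_simp

lemma mixedNorm_empty {n : ℕ} {p pb : ℝ} (hp : 1 < p) (hpb : 1 < pb) :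
    mixedNorm n p pb (indicator (∅ : Set (Euc n)) fun _ => (1:ℝ)) = 0 := by
  have hpb0 : pb ≠ 0 := by positivity
  rw [mixedNorm]
  have h1 : ∀ s ∈ Ioi (0:ℝ),
      (∫ θ, |indicator (∅ : Set (Euc n)) (fun _ => (1:ℝ)) (s • (θ : Euc n))| ^ pb
          ∂(sphereMeasure n)) ^ (p/pb) * s ^ ((n:ℝ)-1) = 0 := by
    intro s _
    have : (fun θ : sphere (0:Euc n) 1 =>
        |indicator (∅ : Set (Euc n)) (fun _ => (1:ℝ)) (s • (θ : Euc n))| ^ pb)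
        = fun _ => (0:ℝ) := by
      funext θ; simp [Real.zero_rpow hpb0]
    rw [this, integral_zero, Real.zero_rpow (by positivity), zero_mul]
  rw [setIntegral_congr_fun measurableSet_Ioi h1, integral_zero,
    Real.zero_rpow (by positivity)]

lemma hardy_indicator_val {n : ℕ} (hn : 2 ≤ n) {r : ℝ} (hr : 0 < r) (x : Euc n) (hx : x ≠ 0) :
    hardyOp n (indicator (ball (0 : Euc n) r) fun _ => (1:ℝ)) x
      = min ‖x‖ r ^ n / ‖x‖ ^ n := by
  have hxn : 0 < ‖x‖ := norm_pos_iff.2 hx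
  have hset : {y : Euc n | ‖y‖ < ‖x‖} = ball (0 : Euc n) ‖x‖ := by
    ext y; simp [mem_ball_zero_iff]
  have hbb : ball (0 : Euc n) ‖x‖ ∩ ball 0 r = ball 0 (min ‖x‖ r) := by
    ext y; simp [mem_ball_zero_iff, lt_min_iff]
  rw [hardyOp, hset, setIntegral_indicator measurableSet_ball, hbb, setIntegral_const,
    measureReal_def, vol_ball_real hn (le_min hxn.le hr.le), smul_eq_mul, mul_one]
  have hb : ballVol n ≠ 0 := (ballVol_pos hn).ne'
  field_simp

lemma hardy_abs_le_one {n : ℕ} (hn : 2 ≤ n) {r : ℝ} (hr : 0 < r) (x : Euc n) :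
    |hardyOp n (indicator (ball (0 : Euc n) r) fun _ => (1:ℝ)) x| ≤ 1 := by
  by_cases hx : x = 0
  · subst hx
    rw [hardyOp]
    have : {y : Euc n | ‖y‖ < ‖(0 : Euc n)‖} = ∅ := by
      ext y
      simp only [norm_zero, mem_setOf_eq, mem_empty_iff_false, iff_false, not_lt]
      exact norm_nonneg y
    rw [this, setIntegral_empty, mul_zero, abs_zero]
    norm_num
  · have hxn : 0 < ‖x‖ := norm_pos_iff.2 hx
    rw [hardy_indicator_val hn hr x hx, abs_of_nonneg (by positivity)]
    rw [div_le_one (by positivity)]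
    exact pow_le_pow_left₀ (le_min hxn.le hr.le) (min_le_left _ _) n

lemma hardy_superlevel {n : ℕ} (hn : 2 ≤ n) {r : ℝ} (hr : 0 < r) {l : ℝ}
    (hl0 : 0 < l) (hl1 : l < 1) (s : ℝ) (hs : 0 < s) (θ : sphere (0 : Euc n) 1) :
    (s • (θ : Euc n) ∈ {x : Euc n |
        l < |hardyOp n (indicator (ball (0 : Euc n) r) fun _ => (1:ℝ)) x|}
      ↔ s < r * l ^ (-(1:ℝ)/(n:ℝ))) := by
  have hnp : (0:ℝ) < (n:ℝ) := by exact_mod_cast Nat.lt_of_lt_of_le Nat.zero_lt_two hn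
  have hn0 : n ≠ 0 := by omega
  have hnorm : ‖s • (θ : Euc n)‖ = s := by
    rw [norm_smul, Real.norm_eq_abs, abs_of_pos hs, mem_sphere_zero_iff_norm.1 θ.2, mul_one]
  have hx : s • (θ : Euc n) ≠ 0 := by
    intro h; rw [h, norm_zero] at hnorm; exact hs.ne hnorm
  have hRgt : (1:ℝ) < l ^ (-(1:ℝ)/(n:ℝ)) := by
    rw [Real.one_lt_rpow_iff_of_pos hl0]
    exact Or.inr ⟨hl1, div_neg_of_neg_of_pos (by norm_num) hnp⟩
  rw [mem_setOf_eq, hardy_indicator_val hn hr _ hx, hnorm,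
    abs_of_nonneg (by positivity)]
  by_cases hsr : s ≤ r
  · rw [min_eq_left hsr, div_self (by positivity)]
    exact iff_of_true hl1 (lt_of_le_of_lt hsr ((lt_mul_iff_one_lt_right hr).2 hRgt))
  · push_neg at hsr
    rw [min_eq_right hsr.le]
    have h2 : (r * l ^ (-(1:ℝ)/(n:ℝ))) ^ n = r ^ n / l := by
      rw [mul_pow, ← Real.rpow_natCast (l ^ (-(1:ℝ)/(n:ℝ))) n, ← Real.rpow_mul hl0.le]
      have : -(1:ℝ)/(n:ℝ) * (n:ℝ) = -1 := by field_simp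
      rw [this, Real.rpow_neg_one, div_eq_mul_inv]
    rw [lt_div_iff₀ (pow_pos hs n),
      show (s < r * l ^ (-(1:ℝ)/(n:ℝ))) ↔ s ^ n < (r * l ^ (-(1:ℝ)/(n:ℝ))) ^ n from
        (pow_lt_pow_iff_left₀ hs.le (by positivity) hn0).symm,
      h2, lt_div_iff₀ hl0, mul_comm]

end Helpers

/-- the characteristic function of a ball is extremal for the weak-type
estimate, and the constant ω_n^{1/p̄₂-1/p̄₁} is sharp. -/
theorem hardy_weak_sharp (n : ℕ) (hn : 2 ≤ n) (p pb1 pb2 : ℝ)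
    (hp : 1 < p) (hpb1 : 1 < pb1) (hpb2 : 1 < pb2) (r : ℝ) (hr : 0 < r) :
    wMixedNorm n p pb2 (hardyOp n (indicator (ball (0 : Euc n) r) fun _ => (1 : ℝ)))
        = sphArea n ^ (1 / pb2 - 1 / pb1) *
          mixedNorm n p pb1 (indicator (ball (0 : Euc n) r) fun _ => (1 : ℝ)) ∧
      ∀ C : ℝ, 0 ≤ C →
        (∀ f : Euc n → ℝ, (∀ x, 0 ≤ f x) → Measurable f →
          wMixedNorm n p pb2 (hardyOp n f) ≤ C * mixedNorm n p pb1 f) →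
        sphArea n ^ (1 / pb2 - 1 / pb1) ≤ C := by
  have hnp : (0:ℝ) < (n:ℝ) := by exact_mod_cast Nat.lt_of_lt_of_le Nat.zero_lt_two hn
  have hω := sphArea_pos hn
  set f₀ : Euc n → ℝ := indicator (ball (0 : Euc n) r) fun _ => (1:ℝ) with hf₀
  have hSball : ∀ s : ℝ, 0 < s → ∀ θ : sphere (0 : Euc n) 1,
      (s • (θ : Euc n) ∈ ball (0 : Euc n) r ↔ s < r) := by
    intro s hs θ
    rw [mem_ball_zero_iff, norm_smul, Real.norm_eq_abs, abs_of_pos hs,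
      mem_sphere_zero_iff_norm.1 θ.2, mul_one]
  have hM : mixedNorm n p pb1 f₀ = sphArea n ^ (1/pb1) * (r ^ (n:ℝ) / n) ^ (1/p) :=
    mixedNorm_indicator hn hp hpb1 hr hSball
  have hMpos : 0 < mixedNorm n p pb1 f₀ := by
    rw [hM]
    exact mul_pos (Real.rpow_pos_of_pos hω _) (Real.rpow_pos_of_pos (by positivity) _)
  set K := sphArea n ^ (1/pb2) * (r ^ (n:ℝ) / n) ^ (1/p) with hKdef
  have hK : 0 < K :=
    mul_pos (Real.rpow_pos_of_pos hω _) (Real.rpow_pos_of_pos (by positivity) _)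
  have hval : ∀ (l : ℝ), 0 < l → l < 1 →
      l * mixedNorm n p pb2 (indicator {x | l < |hardyOp n f₀ x|} fun _ => (1:ℝ))
        = l ^ (1 - 1/p) * K := by
    intro l hl0 hl1
    rw [mixedNorm_indicator hn hp hpb2 (mul_pos hr (Real.rpow_pos_of_pos hl0 _))
      (hardy_superlevel hn hr hl0 hl1)]
    have h3 : (r * l ^ (-(1:ℝ)/(n:ℝ))) ^ (n:ℝ) = r ^ (n:ℝ) * l⁻¹ := by
      rw [Real.mul_rpow hr.le (Real.rpow_nonneg hl0.le _), ← Real.rpow_mul hl0.le]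
      have : -(1:ℝ)/(n:ℝ) * (n:ℝ) = -1 := by field_simp
      rw [this, Real.rpow_neg_one]
    have h4 : r ^ (n:ℝ) * l⁻¹ / (n:ℝ) = (r ^ (n:ℝ) / n) * l⁻¹ := by ring
    rw [h3, h4, Real.mul_rpow (by positivity) (by positivity)]
    have h5 : (l⁻¹) ^ ((1:ℝ)/p) = l ^ (-(1/p)) := by
      rw [← Real.rpow_neg_one l, ← Real.rpow_mul hl0.le]
      norm_num
    have h6 : l * l ^ (-(1/p)) = l ^ (1 - 1/p) := by
      nth_rewrite 1 [← Real.rpow_one l]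
      rw [← Real.rpow_add hl0, show (1:ℝ) + -(1/p) = 1 - 1/p by ring]
    rw [hKdef, h5]
    calc l * (sphArea n ^ (1/pb2) * ((r ^ (n:ℝ)/(n:ℝ)) ^ ((1:ℝ)/p) * l ^ (-(1/p))))
        = (l * l ^ (-(1/p))) * (sphArea n ^ (1/pb2) * (r ^ (n:ℝ)/(n:ℝ)) ^ ((1:ℝ)/p)) := by
          ring
      _ = l ^ (1 - 1/p) * (sphArea n ^ (1/pb2) * (r ^ (n:ℝ)/(n:ℝ)) ^ ((1:ℝ)/p)) := by
          rw [h6]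
  have hBdd : ∀ l : {l : ℝ // 0 < l},
      l.1 * mixedNorm n p pb2 (indicator {x | l.1 < |hardyOp n f₀ x|} fun _ => (1:ℝ)) ≤ K := by
    rintro ⟨l, hl0⟩
    by_cases hl1 : l < 1
    · rw [hval l hl0 hl1]
      have h7 : l ^ (1 - 1/p) ≤ 1 :=
        Real.rpow_le_one hl0.le hl1.le
          (by rw [sub_nonneg]; exact div_le_one_of_le₀ hp.le (by positivity))
      exact mul_le_of_le_one_left hK.le h7
    · push_neg at hl1
      have hempty : {x : Euc n | l < |hardyOp n f₀ x|} = ∅ := by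
        ext x
        simp only [mem_setOf_eq, mem_empty_iff_false, iff_false, not_lt]
        exact le_trans (hardy_abs_le_one hn hr x) hl1
      rw [hempty, mixedNorm_empty hp hpb2, mul_zero]
      exact hK.le
  have hw : wMixedNorm n p pb2 (hardyOp n f₀) = K := by
    rw [wMixedNorm]
    apply le_antisymm (ciSup_le hBdd)
    have hBddAbove : BddAbove (range fun l : {l : ℝ // 0 < l} =>
        l.1 * mixedNorm n p pb2 (indicator {x | l.1 < |hardyOp n f₀ x|} fun _ => (1:ℝ))) :=
      ⟨K, by rintro _ ⟨l, rfl⟩; exact hBdd l⟩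
    have htend : Filter.Tendsto (fun l : ℝ => l ^ (1 - 1/p) * K)
        (nhdsWithin 1 (Iio 1)) (nhds K) := by
      have h : ContinuousAt (fun l : ℝ => l ^ (1 - 1/p) * K) 1 :=
        (Real.continuousAt_rpow_const 1 (1-1/p) (Or.inl one_ne_zero)).mul continuousAt_const
      have h2 := h.tendsto.mono_left (nhdsWithin_le_nhds (s := Iio (1:ℝ)))
      simpa using h2
    refine le_of_tendsto htend ?_
    filter_upwards [Ioo_mem_nhdsLT_of_mem
      (show (1:ℝ) ∈ Ioc 0 1 by constructor <;> norm_num)] with l hl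
    rw [← hval l hl.1 hl.2]
    exact le_ciSup hBddAbove ⟨l, hl.1⟩
  have hfirst : wMixedNorm n p pb2 (hardyOp n f₀)
      = sphArea n ^ (1/pb2 - 1/pb1) * mixedNorm n p pb1 f₀ := by
    rw [hw, hM, hKdef, ← mul_assoc, ← Real.rpow_add hω]
    have : 1/pb2 - 1/pb1 + 1/pb1 = 1/pb2 := by ring
    rw [this]
  refine ⟨hfirst, ?_⟩
  intro C hC hest
  have h := hest f₀ (fun x => indicator_nonneg (fun _ _ => zero_le_one) x)
    (measurable_const.indicator measurableSet_ball)
  rw [hfirst] at h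
  exact le_of_mul_le_mul_right h hMpos


end
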